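/- For every positive integer k, with r = 4k+1, the cardinality of T_r satisfies |T_r| ≥ Catalan(k)·C(4k,2k)·2^{2k}, where Catalan(k) is the k-th Catalan number (the number of classical Dyck words of length 2k) and C(4k,2k) is a binomial coefficient. -/

import Mathlib

open Finset


/-- Weight function `ω` on the alphabet `{0,1}²`: `ω(0,0) = +1`, `ω(1,1) = −1`,
and `ω(a,b) = 0` otherwise. -/
def dyckWt (a b : Bool) : ℤ :=
  if a = false ∧ b = false then 1 else if a = true ∧ b = true then -1 else 0

open Fin.NatCast in
/-- `T_r`: binary words `v` of length `2r+1` with exactly `r+1` ones and `r` zeros,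
`v_0 = v_{2r} = 1`, `v_r = 0`, and such that the word `w_1 ⋯ w_{r−1}` over `{0,1}²`
with `w_i = (v_i, v_{i+r})` is a generalized Dyck word for the weight `dyckWt`:
every prefix sum of weights is nonnegative, and the total sum is `0`. -/
def Tset (r : ℕ) : Set (Fin (2 * r + 1) → Bool) :=
  {v | (Finset.univ.filter (fun i => v i = true)).card = r + 1 ∧
       (Finset.univ.filter (fun i => v i = false)).card = r ∧
       v ((0 : ℕ) : Fin (2 * r + 1)) = true ∧
       v ((2 * r : ℕ) : Fin (2 * r + 1)) = true ∧
       v ((r : ℕ) : Fin (2 * r + 1)) = false ∧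
       (∀ j ∈ Finset.Icc 1 (r - 1),
         0 ≤ ∑ i ∈ Finset.Icc 1 j,
           dyckWt (v ((i : ℕ) : Fin (2 * r + 1))) (v ((i + r : ℕ) : Fin (2 * r + 1)))) ∧
       ∑ i ∈ Finset.Icc 1 (r - 1),
           dyckWt (v ((i : ℕ) : Fin (2 * r + 1))) (v ((i + r : ℕ) : Fin (2 * r + 1))) = 0}


open DyckStep
open Fin.NatCast

set_option linter.unusedVariables false
set_option linter.unusedTactic false

/-- weight of a Dyck step -/
def stepWt : DyckStep → ℤ
  | U => 1
  | D => -1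

/-- pair encoding of a Dyck step -/
def stepPair : DyckStep → Bool × Bool
  | U => (false, false)
  | D => (true, true)

lemma stepPair_injective : Function.Injective stepPair := by
  intro a b h; cases a <;> cases b <;> simp_all [stepPair]

abbrev TripA (k : ℕ) :=
  {p : DyckWord // p.semilength = k} ×
  {s : Finset (Fin (4 * k)) // s.card = 2 * k} × (Fin (2 * k) → Bool)

lemma compl_card {k : ℕ} {s : Finset (Fin (4 * k))} (hs : s.card = 2 * k) :
    sᶜ.card = 2 * k := by
  rw [Finset.card_compl, Fintype.card_fin, hs]; omega

/-- the pair word of a triple -/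
def pairsOf (k : ℕ) : TripA k → Fin (4 * k) → Bool × Bool
  | ⟨⟨p, _⟩, ⟨s, hs⟩, g⟩, i =>
    if h : i ∈ s then
      (g ((s.orderIsoOfFin hs).symm ⟨i, h⟩), !g ((s.orderIsoOfFin hs).symm ⟨i, h⟩))
    else
      stepPair (p.toList.getD
        ((sᶜ.orderIsoOfFin (compl_card hs)).symm ⟨i, Finset.mem_compl.mpr h⟩).val U)

def mkVnat (k : ℕ) (a : TripA k) (n : ℕ) : Bool :=
  if hn : 1 ≤ n ∧ n ≤ 4 * k then (pairsOf k a ⟨n - 1, by omega⟩).1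
  else if hn2 : 4 * k + 2 ≤ n ∧ n ≤ 8 * k + 1 then
    (pairsOf k a ⟨n - (4 * k + 2), by omega⟩).2
  else if n = 4 * k + 1 then false else true

def mkV (k : ℕ) (a : TripA k) : Fin (2 * (4 * k + 1) + 1) → Bool :=
  fun i => mkVnat k a i.val

lemma mkV_cast (k : ℕ) (a : TripA k) (n : ℕ) (h : n < 2 * (4 * k + 1) + 1) :
    mkV k a ((n : ℕ) : Fin (2 * (4 * k + 1) + 1)) = mkVnat k a n := by
  simp [mkV, Fin.val_natCast, Nat.mod_eq_of_lt h]

lemma mkVnat_zero (k : ℕ) (a : TripA k) : mkVnat k a 0 = true := by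
  rw [mkVnat, dif_neg (by omega), dif_neg (by omega), if_neg (by omega)]

lemma mkVnat_mid (k : ℕ) (a : TripA k) : mkVnat k a (4 * k + 1) = false := by
  rw [mkVnat, dif_neg (by omega), dif_neg (by omega), if_pos rfl]

lemma mkVnat_last (k : ℕ) (a : TripA k) : mkVnat k a (8 * k + 2) = true := by
  rw [mkVnat, dif_neg (by omega), dif_neg (by omega), if_neg (by omega)]

lemma mkVnat_fst (k : ℕ) (a : TripA k) (n : ℕ) (h1 : 1 ≤ n) (h2 : n ≤ 4 * k) :
    mkVnat k a n = (pairsOf k a ⟨n - 1, by omega⟩).1 := by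
  rw [mkVnat, dif_pos ⟨h1, h2⟩]

lemma mkVnat_snd (k : ℕ) (a : TripA k) (n : ℕ) (h1 : 4 * k + 2 ≤ n) (h2 : n ≤ 8 * k + 1) :
    mkVnat k a n = (pairsOf k a ⟨n - (4 * k + 2), by omega⟩).2 := by
  rw [mkVnat, dif_neg (by omega), dif_pos ⟨h1, h2⟩]section
variable {M : Type*} [AddCommMonoid M]

lemma list_sum_getD (f : DyckStep → M) (L : List DyckStep) :
    ∑ j ∈ Finset.range L.length, f (L.getD j U) =
      L.count U • f U + L.count D • f D := by
  induction L with
  | nil => simp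
  | cons a L ih =>
    rw [List.length_cons, Finset.sum_range_succ']
    simp only [List.getD_cons_succ, List.getD_cons_zero, ih]
    cases a <;> simp [List.count_cons, succ_nsmul] <;> abel

lemma sum_fin_filter_lt (N c : ℕ) (hc : c ≤ N) (f : ℕ → M) :
    ∑ j ∈ univ.filter (fun j : Fin N => j.val < c), f j.val = ∑ n ∈ Finset.range c, f n := by
  refine Finset.sum_bij' (fun j _ => j.val) (fun n hn => ⟨n, lt_of_lt_of_le (mem_range.mp hn) hc⟩)
    ?_ ?_ ?_ ?_ ?_ <;> simp_all [Finset.mem_filter, Finset.mem_range]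

lemma card_fin_filter_lt (N c : ℕ) (hc : c ≤ N) :
    (univ.filter (fun j : Fin N => j.val < c)).card = c := by
  rw [Finset.card_eq_sum_ones, sum_fin_filter_lt N c hc (fun _ => 1), Finset.sum_const,
    Finset.card_range, smul_eq_mul, mul_one]

lemma lower_filter {N : ℕ} (F : Finset (Fin N))
    (hF : ∀ a b : Fin N, a ≤ b → b ∈ F → a ∈ F) :
    F = univ.filter (fun j => j.val < F.card) := by
  have hcard : F.card ≤ N := by
    simpa using Finset.card_le_univ F
  refine Finset.eq_of_subset_of_card_le (fun j hj => ?_)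
    (by rw [card_fin_filter_lt N F.card hcard])
  have hIic : Finset.Iic j ⊆ F := fun i hi => hF i j (Finset.mem_Iic.mp hi) hj
  have := Finset.card_le_card hIic
  rw [Fin.card_Iic] at this
  simp only [Finset.mem_filter, Finset.mem_univ, true_and]
  omega

lemma sum_orderIso_filter {N c : ℕ} (t : Finset (Fin N)) (h : t.card = c)
    (P : Fin N → Prop) [DecidablePred P] (φ : Fin N → M) :
    ∑ i ∈ t.filter P, φ i =
      ∑ j ∈ univ.filter (fun j : Fin c => P (t.orderIsoOfFin h j)), φ (t.orderIsoOfFin h j) := by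
  refine Finset.sum_bij' (fun i hi => (t.orderIsoOfFin h).symm ⟨i, (Finset.mem_filter.mp hi).1⟩)
    (fun j _ => t.orderIsoOfFin h j) ?_ ?_ ?_ ?_ ?_
  · intro i hi
    simp only [Finset.mem_filter, Finset.mem_univ, true_and]
    rw [OrderIso.apply_symm_apply]
    exact (Finset.mem_filter.mp hi).2
  · intro j hj
    simp only [Finset.mem_filter]
    exact ⟨(t.orderIsoOfFin h j).2, (Finset.mem_filter.mp hj).2⟩
  · intro i hi
    show ((t.orderIsoOfFin h) ((t.orderIsoOfFin h).symm ⟨i, _⟩) : Fin N) = i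
    rw [OrderIso.apply_symm_apply]
  · intro j hj
    show (t.orderIsoOfFin h).symm ⟨((t.orderIsoOfFin h) j : Fin N), _⟩ = j
    rw [Subtype.coe_eta ((t.orderIsoOfFin h) j) _, OrderIso.symm_apply_apply]
  · intro i hi
    show φ i = φ ((t.orderIsoOfFin h) ((t.orderIsoOfFin h).symm ⟨i, _⟩))
    rw [OrderIso.apply_symm_apply]
end

section
variable {k : ℕ} {p : DyckWord} {hp : p.semilength = k} {s : Finset (Fin (4 * k))}
  {hs : s.card = 2 * k} {g : Fin (2 * k) → Bool}

lemma pairsOf_mem {i : Fin (4 * k)} (h : i ∈ s) :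
    pairsOf k ⟨⟨p, hp⟩, ⟨s, hs⟩, g⟩ i =
      (g ((s.orderIsoOfFin hs).symm ⟨i, h⟩), !g ((s.orderIsoOfFin hs).symm ⟨i, h⟩)) := by
  rw [pairsOf, dif_pos h]

lemma pairsOf_not_mem {i : Fin (4 * k)} (h : i ∉ s) :
    pairsOf k ⟨⟨p, hp⟩, ⟨s, hs⟩, g⟩ i =
      stepPair (p.toList.getD
        ((sᶜ.orderIsoOfFin (compl_card hs)).symm ⟨i, Finset.mem_compl.mpr h⟩).val U) := by
  rw [pairsOf, dif_neg h]

lemma pairsOf_isoS (j : Fin (2 * k)) :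
    pairsOf k ⟨⟨p, hp⟩, ⟨s, hs⟩, g⟩ ((s.orderIsoOfFin hs) j : Fin (4 * k)) = (g j, !g j) := by
  rw [pairsOf_mem (hp := hp) ((s.orderIsoOfFin hs) j).2]
  rw [Subtype.coe_eta ((s.orderIsoOfFin hs) j) _, OrderIso.symm_apply_apply]

lemma pairsOf_isoC (j : Fin (2 * k)) :
    pairsOf k ⟨⟨p, hp⟩, ⟨s, hs⟩, g⟩ ((sᶜ.orderIsoOfFin (compl_card hs)) j : Fin (4 * k)) =
      stepPair (p.toList.getD j.val U) := by
  have hmem : ((sᶜ.orderIsoOfFin (compl_card hs)) j : Fin (4 * k)) ∉ s :=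
    Finset.mem_compl.mp ((sᶜ.orderIsoOfFin (compl_card hs)) j).2
  rw [pairsOf_not_mem (hp := hp) hmem]
  congr 2
  rw [Subtype.coe_eta ((sᶜ.orderIsoOfFin (compl_card hs)) j) _, OrderIso.symm_apply_apply]

lemma pairsOf_ne_iff (i : Fin (4 * k)) :
    i ∈ s ↔ (pairsOf k ⟨⟨p, hp⟩, ⟨s, hs⟩, g⟩ i).1 ≠ (pairsOf k ⟨⟨p, hp⟩, ⟨s, hs⟩, g⟩ i).2 := by
  by_cases h : i ∈ s
  · rw [pairsOf_mem (hp := hp) h]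
    simp only [h, true_iff]
    cases g ((s.orderIsoOfFin hs).symm ⟨i, h⟩) <;> simp
  · rw [pairsOf_not_mem (hp := hp) h]
    simp only [h, false_iff, ne_eq, not_not]
    cases p.toList.getD ((sᶜ.orderIsoOfFin (compl_card hs)).symm
      ⟨i, Finset.mem_compl.mpr h⟩).val U <;> rfl

lemma dyckWt_stepPair (d : DyckStep) :
    dyckWt (stepPair d).1 (stepPair d).2 = stepWt d := by
  cases d <;> rfl

lemma dyckWt_pairsOf_mem {i : Fin (4 * k)} (h : i ∈ s) :
    dyckWt (pairsOf k ⟨⟨p, hp⟩, ⟨s, hs⟩, g⟩ i).1 (pairsOf k ⟨⟨p, hp⟩, ⟨s, hs⟩, g⟩ i).2 = 0 := by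
  rw [pairsOf_mem (hp := hp) h]
  cases g ((s.orderIsoOfFin hs).symm ⟨i, h⟩) <;> rfl

end

-- layer 4
section
lemma sum_stepWt_range (L : List DyckStep) (m : ℕ) (hm : m ≤ L.length) :
    ∑ n ∈ Finset.range m, stepWt (L.getD n U) =
      ((L.take m).count U : ℤ) - (L.take m).count D := by
  have h1 := list_sum_getD (M := ℤ) stepWt (L.take m)
  rw [List.length_take, min_eq_left hm] at h1
  have h2 : ∀ n ∈ Finset.range m, stepWt ((L.take m).getD n U) = stepWt (L.getD n U) := by
    intro n hn
    have hn' : n < m := Finset.mem_range.mp hn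
    rw [List.getD_eq_getElem _ _ (by rw [List.length_take]; omega),
      List.getD_eq_getElem _ _ (by omega)]
    congr 1
    exact List.getElem_take
  rw [← Finset.sum_congr rfl h2, h1]
  simp [stepWt, nsmul_eq_mul, sub_eq_add_neg]

lemma dyck_sum_nonneg (p : DyckWord) (c : ℕ) (hc : c ≤ p.toList.length) :
    0 ≤ ∑ n ∈ Finset.range c, stepWt (p.toList.getD n U) := by
  rw [sum_stepWt_range _ _ hc, sub_nonneg]
  exact_mod_cast p.count_D_le_count_U c

lemma dyck_sum_total (p : DyckWord) :
    ∑ n ∈ Finset.range p.toList.length, stepWt (p.toList.getD n U) = 0 := by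
  rw [sum_stepWt_range _ _ le_rfl, List.take_length, sub_eq_zero]
  exact_mod_cast p.count_U_eq_count_D

variable {k : ℕ} {p : DyckWord} {hp : p.semilength = k} {s : Finset (Fin (4 * k))}
  {hs : s.card = 2 * k} {g : Fin (2 * k) → Bool}

lemma length_eq (hp : p.semilength = k) : p.toList.length = 2 * k := by
  rw [← p.two_mul_semilength_eq_length, hp]

/-- Lemma A: prefix sums of the pair weights are initial-segment sums of the Dyck word. -/
lemma sum_dyckWt_prefix (hp : p.semilength = k) (m : ℕ) (hm : m ≤ 4 * k) :
    ∃ c, c ≤ 2 * k ∧ (m = 4 * k → c = 2 * k) ∧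
      ∑ i ∈ Finset.univ.filter (fun i : Fin (4 * k) => i.val < m),
        dyckWt (pairsOf k ⟨⟨p, hp⟩, ⟨s, hs⟩, g⟩ i).1 (pairsOf k ⟨⟨p, hp⟩, ⟨s, hs⟩, g⟩ i).2
        = ∑ n ∈ Finset.range c, stepWt (p.toList.getD n U) := by
  classical
  set a : TripA k := ⟨⟨p, hp⟩, ⟨s, hs⟩, g⟩ with ha
  set e := sᶜ.orderIsoOfFin (compl_card hs) with he
  set F := Finset.univ.filter (fun j : Fin (2 * k) => ((e j : Fin (4 * k))).val < m) with hF
  have hFle : F.card ≤ 2 * k := by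
    have := Finset.card_le_univ F
    simpa using this
  refine ⟨F.card, hFle, ?_, ?_⟩
  · intro hm4
    have : F = Finset.univ := by
      rw [hF]
      refine Finset.filter_true_of_mem (fun j _ => ?_)
      have := (e j : Fin (4 * k)).isLt
      omega
    rw [this]
    simp
  · rw [← Finset.sum_filter_add_sum_filter_not
      (Finset.univ.filter (fun i : Fin (4 * k) => i.val < m)) (· ∈ s)]
    have hz : ∑ i ∈ (Finset.univ.filter (fun i : Fin (4 * k) => i.val < m)).filter (· ∈ s),
        dyckWt (pairsOf k a i).1 (pairsOf k a i).2 = 0 := by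
      refine Finset.sum_eq_zero (fun i hi => ?_)
      exact dyckWt_pairsOf_mem (hp := hp) (Finset.mem_filter.mp hi).2
    rw [hz, zero_add]
    have hset : (Finset.univ.filter (fun i : Fin (4 * k) => i.val < m)).filter (· ∉ s)
        = sᶜ.filter (fun i => i.val < m) := by
      ext i
      simp [Finset.mem_filter, and_comm]
    rw [hset, sum_orderIso_filter sᶜ (compl_card hs) (fun i => i.val < m)
      (fun i => dyckWt (pairsOf k a i).1 (pairsOf k a i).2)]
    have hterm : ∀ j : Fin (2 * k),
        dyckWt (pairsOf k a (e j : Fin (4 * k))).1 (pairsOf k a (e j : Fin (4 * k))).2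
          = stepWt (p.toList.getD j.val U) := by
      intro j
      rw [ha, pairsOf_isoC (hp := hp), dyckWt_stepPair]
    rw [Finset.sum_congr rfl (fun j hj => hterm j)]
    have hlow : F = Finset.univ.filter (fun j : Fin (2 * k) => j.val < F.card) := by
      refine lower_filter F (fun a' b' hab hb => ?_)
      rw [hF, Finset.mem_filter] at hb ⊢
      refine ⟨Finset.mem_univ _, ?_⟩
      have : (e a' : Fin (4 * k)) ≤ (e b' : Fin (4 * k)) := by
        exact_mod_cast (e.le_iff_le).mpr hab
      have hb2 := hb.2
      omega
    calc ∑ j ∈ F, stepWt (p.toList.getD j.val U)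
        = ∑ j ∈ Finset.univ.filter (fun j : Fin (2 * k) => j.val < F.card),
            stepWt (p.toList.getD j.val U) := by rw [← hlow]
      _ = ∑ n ∈ Finset.range F.card, stepWt (p.toList.getD n U) :=
          sum_fin_filter_lt _ _ hFle (fun n => stepWt (p.toList.getD n U))

/-- Lemma C: total number of `true`s among the pair entries is `4k`. -/
lemma pairs_true_count (hp : p.semilength = k) :
    ∑ i : Fin (4 * k), ((if (pairsOf k ⟨⟨p, hp⟩, ⟨s, hs⟩, g⟩ i).1 = true then 1 else 0)
      + (if (pairsOf k ⟨⟨p, hp⟩, ⟨s, hs⟩, g⟩ i).2 = true then 1 else 0)) = 4 * k := by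
  classical
  set a : TripA k := ⟨⟨p, hp⟩, ⟨s, hs⟩, g⟩ with ha
  set e := sᶜ.orderIsoOfFin (compl_card hs) with he
  set φ : Fin (4 * k) → ℕ := fun i => (if (pairsOf k a i).1 = true then 1 else 0)
      + (if (pairsOf k a i).2 = true then 1 else 0) with hφ
  have hsplit := Finset.sum_filter_add_sum_filter_not (Finset.univ : Finset (Fin (4 * k)))
    (· ∈ s) φ
  rw [← hsplit]
  have h1 : ∑ i ∈ Finset.univ.filter (· ∈ s), φ i = 2 * k := by
    have hee : ∀ i ∈ s, φ i = 1 := by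
      intro i hi
      show (if (pairsOf k a i).1 = true then 1 else 0)
        + (if (pairsOf k a i).2 = true then 1 else 0) = 1
      rw [ha, pairsOf_mem (hp := hp) hi]
      cases g ((s.orderIsoOfFin hs).symm ⟨i, hi⟩) <;> rfl
    rw [Finset.filter_univ_mem, Finset.sum_congr rfl hee, Finset.sum_const, hs,
      smul_eq_mul, mul_one]
  have h2 : ∑ i ∈ Finset.univ.filter (· ∉ s), φ i = 2 * k := by
    have hc : Finset.univ.filter (· ∉ s) = sᶜ.filter (fun _ => True) := by
      ext i; simp
    rw [hc, sum_orderIso_filter sᶜ (compl_card hs) (fun _ => True) φ, Finset.filter_true]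
    have hterm : ∀ j : Fin (2 * k), φ (e j : Fin (4 * k))
        = (fun d => if d = D then 2 else 0) (p.toList.getD j.val U) := by
      intro j
      rw [hφ]
      simp only
      rw [ha, pairsOf_isoC (hp := hp)]
      cases p.toList.getD j.val U <;> rfl
    rw [Finset.sum_congr rfl (fun j _ => hterm j)]
    rw [Fin.sum_univ_eq_sum_range (fun n => (fun d => if d = D then 2 else 0)
      (p.toList.getD n U)) (2 * k)]
    have hls := list_sum_getD (M := ℕ) (fun d => if d = D then 2 else 0) p.toList
    rw [length_eq hp] at hls
    have hU : p.toList.count U = k := hp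
    have hD : p.toList.count D = k := by
      rw [← DyckWord.semilength_eq_count_D, hp]
    rw [hU, hD] at hls
    simp only [hls]
    simp
    omega
  rw [h1, h2]; omega
end
-- layer 5
section

lemma mkVnat_fst'' (k : ℕ) (a : TripA k) (i : Fin (4 * k)) :
    mkVnat k a (i.val + 1) = (pairsOf k a i).1 := by
  have hi := i.isLt
  rw [mkVnat_fst k a _ (by omega) (by omega)]
  have h : (⟨i.val + 1 - 1, by omega⟩ : Fin (4 * k)) = i := Fin.ext (by simp)
  rw [h]

lemma mkVnat_snd'' (k : ℕ) (a : TripA k) (i : Fin (4 * k)) :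
    mkVnat k a (i.val + (4 * k + 2)) = (pairsOf k a i).2 := by
  have hi := i.isLt
  rw [mkVnat_snd k a _ (by omega) (by omega)]
  have h : (⟨i.val + (4 * k + 2) - (4 * k + 2), by omega⟩ : Fin (4 * k)) = i :=
    Fin.ext (by simp)
  rw [h]

lemma mkV_injective (k : ℕ) : Function.Injective (mkV k) := by
  rintro ⟨⟨p, hp⟩, ⟨s, hs⟩, g⟩ ⟨⟨p', hp'⟩, ⟨s', hs'⟩, g'⟩ h
  have hpairs : pairsOf k ⟨⟨p, hp⟩, ⟨s, hs⟩, g⟩ = pairsOf k ⟨⟨p', hp'⟩, ⟨s', hs'⟩, g'⟩ := by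
    funext i
    have hi := i.isLt
    have h1 := congrFun h ((i.val + 1 : ℕ) : Fin (2 * (4 * k + 1) + 1))
    have h2 := congrFun h ((i.val + (4 * k + 2) : ℕ) : Fin (2 * (4 * k + 1) + 1))
    rw [mkV_cast k _ _ (by omega), mkV_cast k _ _ (by omega),
      mkVnat_fst'' k _ i, mkVnat_fst'' k _ i] at h1
    rw [mkV_cast k _ _ (by omega), mkV_cast k _ _ (by omega),
      mkVnat_snd'' k _ i, mkVnat_snd'' k _ i] at h2
    exact Prod.ext h1 h2
  have hss : s = s' := by
    ext i
    have e1 := pairsOf_ne_iff (hp := hp) (hs := hs) (g := g) i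
    have e2 := pairsOf_ne_iff (hp := hp') (hs := hs') (g := g') i
    rw [e1, congrFun hpairs i]
    exact e2.symm
  subst hss
  have hgg : g = g' := by
    funext j
    have h1 := congrFun hpairs ((s.orderIsoOfFin hs) j : Fin (4 * k))
    rw [pairsOf_isoS (hp := hp) j, pairsOf_isoS (hp := hp') j] at h1
    exact congrArg Prod.fst h1
  have hL : p.toList = p'.toList := by
    refine List.ext_getElem ?_ ?_
    · rw [length_eq hp, length_eq hp']
    · intro n h1 h2
      have hn : n < 2 * k := by rw [length_eq hp] at h1; exact h1
      have hc := congrFun hpairs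
        ((sᶜ.orderIsoOfFin (compl_card hs)) ⟨n, hn⟩ : Fin (4 * k))
      rw [pairsOf_isoC (hp := hp), pairsOf_isoC (hp := hp')] at hc
      have h3 := stepPair_injective hc
      rwa [List.getD_eq_getElem _ _ (by exact h1), List.getD_eq_getElem _ _ (by exact h2)] at h3
  have hpp : p = p' := DyckWord.ext hL
  subst hpp hgg
  rfl

end
-- layer 6: membership
section

lemma sum_Icc_eq_filter (k : ℕ) (a : TripA k) (j : ℕ) (hj : j ≤ 4 * k) :
    ∑ i ∈ Finset.Icc 1 j,
        dyckWt (mkV k a ((i : ℕ) : Fin (2 * (4 * k + 1) + 1)))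
          (mkV k a ((i + (4 * k + 1) : ℕ) : Fin (2 * (4 * k + 1) + 1)))
      = ∑ i ∈ Finset.univ.filter (fun i : Fin (4 * k) => i.val < j),
          dyckWt (pairsOf k a i).1 (pairsOf k a i).2 := by
  refine Finset.sum_bij' (fun n hn => (⟨n - 1, by
      have := Finset.mem_Icc.mp hn; omega⟩ : Fin (4 * k)))
    (fun i _ => i.val + 1) ?_ ?_ ?_ ?_ ?_
  · intro n hn
    have := Finset.mem_Icc.mp hn
    simp only [Finset.mem_filter, Finset.mem_univ, true_and]
    omega
  · intro i hi
    rw [Finset.mem_filter] at hi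
    rw [Finset.mem_Icc]
    show 1 ≤ i.val + 1 ∧ i.val + 1 ≤ j
    omega
  · intro n hn
    have := Finset.mem_Icc.mp hn
    show n - 1 + 1 = n
    omega
  · intro i hi
    exact Fin.ext (by simp)
  · intro n hn
    have hn' := Finset.mem_Icc.mp hn
    rw [mkV_cast k a n (by omega), mkV_cast k a (n + (4 * k + 1)) (by omega),
      mkVnat_fst k a n (by omega) (by omega),
      mkVnat_snd k a (n + (4 * k + 1)) (by omega) (by omega)]
    have h2 : (⟨n + (4 * k + 1) - (4 * k + 2), by omega⟩ : Fin (4 * k))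
        = ⟨n - 1, by omega⟩ := Fin.ext (by simp; omega)
    rw [h2]

lemma mkV_mem_Tset (k : ℕ) (a : TripA k) : mkV k a ∈ Tset (4 * k + 1) := by
  classical
  obtain ⟨⟨p, hp⟩, ⟨s, hs⟩, g⟩ := a
  have htrue : (Finset.univ.filter
      (fun i : Fin (2 * (4 * k + 1) + 1) =>
        mkV k ⟨⟨p, hp⟩, ⟨s, hs⟩, g⟩ i = true)).card = 4 * k + 1 + 1 := by
    rw [Finset.card_filter]
    have hconv : (∑ i ∈ Finset.univ, if mkV k ⟨⟨p, hp⟩, ⟨s, hs⟩, g⟩ i = true then (1 : ℕ) else 0)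
        = ∑ n ∈ Finset.range (2 * (4 * k + 1) + 1),
            (if mkVnat k ⟨⟨p, hp⟩, ⟨s, hs⟩, g⟩ n = true then (1 : ℕ) else 0) :=
      Fin.sum_univ_eq_sum_range
        (fun n => if mkVnat k ⟨⟨p, hp⟩, ⟨s, hs⟩, g⟩ n = true then (1 : ℕ) else 0) _
    rw [hconv, show 2 * (4 * k + 1) + 1 = (4 * k + 1) + (4 * k + 2) by ring,
      Finset.sum_range_add, Finset.sum_range_succ',
      show 4 * k + 2 = (4 * k + 1) + 1 by ring, Finset.sum_range_succ',
      Finset.sum_range_succ]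
    beta_reduce
    have hA : (∑ i ∈ Finset.range (4 * k),
          if mkVnat k ⟨⟨p, hp⟩, ⟨s, hs⟩, g⟩ (i + 1) = true then (1 : ℕ) else 0)
        = ∑ i : Fin (4 * k),
            (if (pairsOf k ⟨⟨p, hp⟩, ⟨s, hs⟩, g⟩ i).1 = true then (1 : ℕ) else 0) := by
      rw [← Fin.sum_univ_eq_sum_range
        (fun n => if mkVnat k ⟨⟨p, hp⟩, ⟨s, hs⟩, g⟩ (n + 1) = true then (1 : ℕ) else 0) (4 * k)]
      exact Finset.sum_congr rfl (fun i _ => by rw [mkVnat_fst'' k _ i])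
    have hB : (∑ i ∈ Finset.range (4 * k),
          if mkVnat k ⟨⟨p, hp⟩, ⟨s, hs⟩, g⟩ (4 * k + 1 + (i + 1)) = true then (1 : ℕ) else 0)
        = ∑ i : Fin (4 * k),
            (if (pairsOf k ⟨⟨p, hp⟩, ⟨s, hs⟩, g⟩ i).2 = true then (1 : ℕ) else 0) := by
      rw [← Fin.sum_univ_eq_sum_range
        (fun n => if mkVnat k ⟨⟨p, hp⟩, ⟨s, hs⟩, g⟩ (4 * k + 1 + (n + 1)) = true
          then (1 : ℕ) else 0) (4 * k)]
      refine Finset.sum_congr rfl (fun i _ => ?_)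
      rw [show 4 * k + 1 + (i.val + 1) = i.val + (4 * k + 2) by omega, mkVnat_snd'' k _ i]
    rw [hA, hB, mkVnat_zero, show 4 * k + 1 + (4 * k + 1) = 8 * k + 2 by ring, mkVnat_last]
    simp only [Nat.add_zero]
    rw [mkVnat_mid]
    have hC := pairs_true_count (hs := hs) (g := g) hp
    rw [Finset.sum_add_distrib] at hC
    generalize hS1 : (∑ i : Fin (4 * k),
      if (pairsOf k (⟨⟨p, hp⟩, ⟨s, hs⟩, g⟩ : TripA k) i).1 = true then (1:ℕ) else 0) = S1 at hC ⊢
    generalize hS2 : (∑ i : Fin (4 * k),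
      if (pairsOf k (⟨⟨p, hp⟩, ⟨s, hs⟩, g⟩ : TripA k) i).2 = true then (1:ℕ) else 0) = S2 at hC ⊢
    simp only [Bool.false_eq_true, eq_self_iff_true, if_true, if_false]
    omega
  have hfalse : (Finset.univ.filter
      (fun i : Fin (2 * (4 * k + 1) + 1) =>
        mkV k ⟨⟨p, hp⟩, ⟨s, hs⟩, g⟩ i = false)).card = 4 * k + 1 := by
    have hcompl : Finset.univ.filter
        (fun i : Fin (2 * (4 * k + 1) + 1) => mkV k ⟨⟨p, hp⟩, ⟨s, hs⟩, g⟩ i = false)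
        = (Finset.univ.filter (fun i => mkV k ⟨⟨p, hp⟩, ⟨s, hs⟩, g⟩ i = true))ᶜ := by
      ext i
      simp
    rw [hcompl, Finset.card_compl, htrue, Fintype.card_fin]
    omega
  refine ⟨htrue, hfalse, ?_, ?_, ?_, ?_, ?_⟩
  · rw [mkV_cast k _ 0 (by omega), mkVnat_zero]
  · have h82 : ((2 * (4 * k + 1) : ℕ) : Fin (2 * (4 * k + 1) + 1))
        = ((8 * k + 2 : ℕ) : Fin (2 * (4 * k + 1) + 1)) := by
      congr 1
      ring
    rw [h82, mkV_cast k _ _ (by omega), mkVnat_last]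
  · rw [mkV_cast k _ _ (by omega), mkVnat_mid]
  · intro j hj
    rw [show 4 * k + 1 - 1 = 4 * k by omega] at hj
    have hj2 := (Finset.mem_Icc.mp hj).2
    rw [sum_Icc_eq_filter k _ j hj2]
    obtain ⟨c, hc1, _, heq⟩ := sum_dyckWt_prefix (hs := hs) (g := g) hp j hj2
    rw [heq]
    exact dyck_sum_nonneg p c (by rw [length_eq hp]; omega)
  · rw [show 4 * k + 1 - 1 = 4 * k by omega,
      sum_Icc_eq_filter k _ (4 * k) le_rfl]
    obtain ⟨c, _, hc2, heq⟩ := sum_dyckWt_prefix (hs := hs) (g := g) hp (4 * k) le_rfl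
    rw [heq, hc2 rfl, ← length_eq hp]
    exact dyck_sum_total p

end


/-- For `r = 4k+1`, `|T_r| ≥ Catalan(k)·C(4k,2k)·2^{2k}`. -/
theorem T_card_lower (k : ℕ) (hk : 0 < k) :
    catalan k * Nat.choose (4 * k) (2 * k) * 2 ^ (2 * k) ≤ (Tset (4 * k + 1)).ncard := by
  classical
  have hinj := mkV_injective k
  have hsub : Set.range (mkV k) ⊆ Tset (4 * k + 1) := by
    rintro _ ⟨a, rfl⟩
    exact mkV_mem_Tset k a
  have hcard : Fintype.card (TripA k) = catalan k * Nat.choose (4 * k) (2 * k) * 2 ^ (2 * k) := by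
    rw [Fintype.card_prod, Fintype.card_prod, DyckWord.card_dyckWord_semilength_eq_catalan,
      Fintype.card_finset_len, Fintype.card_fun, Fintype.card_fin, Fintype.card_fin,
      Fintype.card_bool, mul_assoc]
  have hrange : (Set.range (mkV k)).ncard = catalan k * Nat.choose (4 * k) (2 * k) * 2 ^ (2 * k) := by
    rw [← Nat.card_coe_set_eq, ← hcard, ← Nat.card_eq_fintype_card]
    exact Nat.card_congr (Equiv.ofInjective _ hinj).symm
  calc catalan k * Nat.choose (4 * k) (2 * k) * 2 ^ (2 * k)
      = (Set.range (mkV k)).ncard := hrange.symm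
    _ ≤ (Tset (4 * k + 1)).ncard := Set.ncard_le_ncard hsub (Set.toFinite _)
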